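/- Let v = a·e₁ + b·e₂ be a primitive vector in the A₂ lattice (Gram matrix [[2,1],[1,2]]). Then a primitive generator u of the orthogonal complement v⊥ satisfies u² = v²/3 if 3 divides v², and u² = 3·v² otherwise. -/

import Mathlib

/-- The bilinear form of the A₂ lattice on ℤ × ℤ (Gram matrix [[2,1],[1,2]]). -/
def A2form (v w : ℤ × ℤ) : ℤ := 2*v.1*w.1 + 2*v.2*w.2 + v.1*w.2 + v.2*w.1

/-- A vector of the A₂ lattice is primitive if its coordinates are coprime. -/
def A2Primitive (v : ℤ × ℤ) : Prop := Int.gcd v.1 v.2 = 1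

lemma aux_lin_of_form (a b : ℤ) (h : (3:ℤ) ∣ 2*a*a + 2*b*b + a*b + b*a) :
    (3:ℤ) ∣ a + 2*b := by
  have h0 : ((a:ZMod 3)) + 2*(b:ZMod 3) = 0 := by
    have h1 : ((2*a*a + 2*b*b + a*b + b*a : ℤ) : ZMod 3) = 0 := by
      rw [ZMod.intCast_zmod_eq_zero_iff_dvd]; exact_mod_cast h
    push_cast at h1
    revert h1
    generalize (a : ZMod 3) = x
    generalize (b : ZMod 3) = y
    revert x y; decide
  have h2 := (ZMod.intCast_zmod_eq_zero_iff_dvd (a + 2*b) 3).mp (by push_cast; exact h0)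
  exact_mod_cast h2

lemma aux_form_of_lin (a b : ℤ) (h : (3:ℤ) ∣ a + 2*b) :
    (3:ℤ) ∣ 2*a*a + 2*b*b + a*b + b*a := by
  have h0 : (2*(a:ZMod 3)*(a:ZMod 3) + 2*(b:ZMod 3)*(b:ZMod 3)
      + (a:ZMod 3)*(b:ZMod 3) + (b:ZMod 3)*(a:ZMod 3)) = 0 := by
    have h1 : ((a + 2*b : ℤ) : ZMod 3) = 0 := by
      rw [ZMod.intCast_zmod_eq_zero_iff_dvd]; exact_mod_cast h
    push_cast at h1
    revert h1
    generalize (a : ZMod 3) = x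
    generalize (b : ZMod 3) = y
    revert x y; decide
  have h2 := (ZMod.intCast_zmod_eq_zero_iff_dvd (2*a*a + 2*b*b + a*b + b*a) 3).mp
    (by push_cast; exact h0)
  exact_mod_cast h2

theorem stmt_0 (v u : ℤ × ℤ) (hv : A2Primitive v) (hu : A2Primitive u)
    (horth : A2form u v = 0)
    (hgen : ∀ w : ℤ × ℤ, A2form w v = 0 → ∃ k : ℤ, w = k • u) :
    (3 ∣ A2form v v → 3 * A2form u u = A2form v v) ∧
    (¬ 3 ∣ A2form v v → A2form u u = 3 * A2form v v) := by
  obtain ⟨k, hk⟩ := hgen (v.1 + 2*v.2, -(2*v.1 + v.2)) (by simp only [A2form]; ring)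
  have h1 : v.1 + 2*v.2 = k * u.1 := by
    have := congrArg Prod.fst hk; simpa using this
  have h2 : -(2*v.1 + v.2) = k * u.2 := by
    have := congrArg Prod.snd hk; simpa using this
  have hkey : k^2 * A2form u u = 3 * A2form v v := by
    have h3 : A2form (v.1+2*v.2, -(2*v.1+v.2)) (v.1+2*v.2, -(2*v.1+v.2))
        = 3 * A2form v v := by
      simp only [A2form]; ring
    rw [← h3, hk]
    simp only [A2form, Prod.smul_fst, Prod.smul_snd, smul_eq_mul]
    ring
  have hk0 : k ≠ 0 := by
    rintro rfl
    simp only [zero_mul] at h1 h2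
    have ha : v.1 = 0 := by omega
    have hb : v.2 = 0 := by omega
    simp [A2Primitive, ha, hb] at hv
  have hdvd : k ∣ 3 := by
    have d1 : k ∣ 3 * v.1 := ⟨-u.1 - 2*u.2, by linear_combination (-1)*h1 - 2*h2⟩
    have d2 : k ∣ 3 * v.2 := ⟨2*u.1 + u.2, by linear_combination 2*h1 + h2⟩
    have hg := Int.dvd_coe_gcd d1 d2
    rw [Int.gcd_mul_left] at hg
    simpa [show Int.gcd v.1 v.2 = 1 from hv] using hg
  have hcase : k = 1 ∨ k = -1 ∨ k = 3 ∨ k = -3 := by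
    have hn : k.natAbs ∣ 3 := Int.natAbs_dvd_natAbs.mpr hdvd
    have hle : k.natAbs ≤ 3 := Nat.le_of_dvd (by norm_num) hn
    have hne : k.natAbs ≠ 0 := by simpa using hk0
    have h13 : k.natAbs = 1 ∨ k.natAbs = 3 := by
      interval_cases h : k.natAbs <;> revert hn <;> decide
    omega
  constructor
  · intro h3v
    have hd1 : (3:ℤ) ∣ v.1 + 2*v.2 := by
      apply aux_lin_of_form
      simpa only [A2form] using h3v
    have hd2 : (3:ℤ) ∣ 2*v.1 + v.2 := by
      obtain ⟨c, hc⟩ := hd1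
      exact ⟨v.1 + v.2 - c, by linarith⟩
    rcases hcase with rfl | rfl | rfl | rfl
    · exfalso
      have hu1 : (3:ℤ) ∣ u.1 := by rw [show u.1 = v.1 + 2*v.2 by omega]; exact hd1
      have hu2 : (3:ℤ) ∣ u.2 := by rw [show u.2 = -(2*v.1 + v.2) by omega]; exact hd2.neg_right
      have hg : (3:ℤ) ∣ (Int.gcd u.1 u.2 : ℤ) := Int.dvd_coe_gcd hu1 hu2
      rw [hu] at hg
      norm_num at hg
    · exfalso
      have hu1 : (3:ℤ) ∣ u.1 := by
        rw [show u.1 = -(v.1 + 2*v.2) by omega]; exact hd1.neg_right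
      have hu2 : (3:ℤ) ∣ u.2 := by rw [show u.2 = 2*v.1 + v.2 by omega]; exact hd2
      have hg : (3:ℤ) ∣ (Int.gcd u.1 u.2 : ℤ) := Int.dvd_coe_gcd hu1 hu2
      rw [hu] at hg
      norm_num at hg
    · norm_num at hkey; linarith
    · norm_num at hkey; linarith
  · intro h3v
    rcases hcase with rfl | rfl | rfl | rfl
    · norm_num at hkey; linarith
    · norm_num at hkey; linarith
    · exfalso
      apply h3v
      have hd1 : (3:ℤ) ∣ v.1 + 2*v.2 := ⟨u.1, by linarith⟩
      simpa only [A2form] using aux_form_of_lin v.1 v.2 hd1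
    · exfalso
      apply h3v
      have hd1 : (3:ℤ) ∣ v.1 + 2*v.2 := ⟨-u.1, by linarith⟩
      simpa only [A2form] using aux_form_of_lin v.1 v.2 hd1
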